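/- Suppose f: ℝ^d → ℝ is μ-strongly convex and L-smooth, and let ρ = μ/L. Define E(z) = E(x,y) = D_f(x, x*) + (μ/2)‖y − x*‖² where z = (x,y) and x* is the minimizer. Then for any two points z_k = (x_k, y_k), z_{k+1} = (x_{k+1}, y_{k+1}) in ℝ^{2d} and any α > 0: |α⟨y_{k+1} − y_k, ∇f(x_{k+1}) − ∇f(x_k)⟩| ≤ (α/√ρ)·(D_f(x_k, x_{k+1}) + (μ/2)‖y_k − y_{k+1}‖²), so that (1 − α/√ρ) D_E(z_k, z_{k+1}) ≤ D_E(z_k, z_{k+1}) ± α⟨y_{k+1} − y_k, ∇f(x_{k+1}) − ∇f(x_k)⟩ ≤ (1 + α/√ρ) D_E(z_k, z_{k+1}). -/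

import Mathlib

open scoped RealInnerProductSpace

lemma aorhb_line_hasDerivAt {d : ℕ} (f : EuclideanSpace ℝ (Fin d) → ℝ)
    (f' : EuclideanSpace ℝ (Fin d) → EuclideanSpace ℝ (Fin d))
    (hf : ∀ x, HasGradientAt f (f' x) x) (x v : EuclideanSpace ℝ (Fin d)) (t : ℝ) :
    HasDerivAt (fun t : ℝ => f (x + t • v)) ⟪f' (x + t • v), v⟫ t := by
  have h1 : HasDerivAt (fun t : ℝ => x + t • v) v t := by
    simpa using ((hasDerivAt_id t).smul_const v).const_add x
  have h2 := (hf (x + t • v)).hasFDerivAt.comp_hasDerivAt t h1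
  simpa [InnerProductSpace.toDual_apply_apply, Function.comp_def] using h2

lemma aorhb_descent_lemma {d : ℕ} (f : EuclideanSpace ℝ (Fin d) → ℝ)
    (f' : EuclideanSpace ℝ (Fin d) → EuclideanSpace ℝ (Fin d)) (L : ℝ)
    (hf : ∀ x, HasGradientAt f (f' x) x)
    (hsmooth : ∀ x y, ‖f' x - f' y‖ ≤ L * ‖x - y‖)
    (x y : EuclideanSpace ℝ (Fin d)) :
    f y ≤ f x + ⟪f' x, y - x⟫ + L / 2 * ‖y - x‖ ^ 2 := by
  set v := y - x with hv
  set g : ℝ → ℝ := fun t => f (x + t • v) - t * ⟪f' x, v⟫ - L * t ^ 2 / 2 * ‖v‖ ^ 2 with hg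
  have hderiv : ∀ t : ℝ, HasDerivAt g (⟪f' (x + t • v), v⟫ - ⟪f' x, v⟫ - L * t * ‖v‖ ^ 2) t := by
    intro t
    have h1 := aorhb_line_hasDerivAt f f' hf x v t
    have h2 : HasDerivAt (fun t : ℝ => t * ⟪f' x, v⟫) ⟪f' x, v⟫ t := by
      simpa using (hasDerivAt_id t).mul_const (⟪f' x, v⟫ : ℝ)
    have h3 : HasDerivAt (fun t : ℝ => L * t ^ 2 / 2 * ‖v‖ ^ 2) (L * t * ‖v‖ ^ 2) t := by
      have := ((hasDerivAt_pow 2 t).const_mul L).div_const 2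
      have := this.mul_const (‖v‖ ^ 2)
      exact this.congr_deriv (by rw [show (2:ℕ) - 1 = 1 from rfl, pow_one]; push_cast; ring)
    exact (h1.sub h2).sub h3
  have hmono : AntitoneOn g (Set.Icc 0 1) := by
    apply antitoneOn_of_deriv_nonpos (convex_Icc 0 1)
    · exact fun t _ => (hderiv t).continuousAt.continuousWithinAt
    · exact fun t _ => (hderiv t).differentiableAt.differentiableWithinAt
    · intro t ht
      rw [interior_Icc] at ht
      rw [(hderiv t).deriv]
      have hb : ⟪f' (x + t • v) - f' x, v⟫ ≤ L * t * ‖v‖ ^ 2 := by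
        calc ⟪f' (x + t • v) - f' x, v⟫ ≤ ‖f' (x + t • v) - f' x‖ * ‖v‖ :=
              real_inner_le_norm _ _
          _ ≤ (L * ‖(x + t • v) - x‖) * ‖v‖ := by
              have := hsmooth (x + t • v) x
              nlinarith [norm_nonneg v]
          _ = L * t * ‖v‖ ^ 2 := by
              rw [add_sub_cancel_left, norm_smul, Real.norm_eq_abs, abs_of_pos ht.1]; ring
      have : ⟪f' (x + t • v) - f' x, v⟫ = ⟪f' (x + t • v), v⟫ - ⟪f' x, v⟫ :=
        inner_sub_left _ _ _
      linarith
  have h01 := hmono (Set.left_mem_Icc.2 zero_le_one) (Set.right_mem_Icc.2 zero_le_one) zero_le_one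
  simp only [hg, zero_smul, add_zero, one_smul, zero_mul, one_pow, mul_one] at h01
  have : x + v = y := by rw [hv]; abel
  rw [this] at h01
  nlinarith [h01]

lemma aorhb_coco {d : ℕ} (f : EuclideanSpace ℝ (Fin d) → ℝ)
    (f' : EuclideanSpace ℝ (Fin d) → EuclideanSpace ℝ (Fin d)) (μ L : ℝ)
    (hμ : 0 < μ) (hμL : μ ≤ L)
    (descent : ∀ x y, f y ≤ f x + ⟪f' x, y - x⟫ + L / 2 * ‖y - x‖ ^ 2)
    (hsc : ∀ x y, f y - f x - ⟪f' x, y - x⟫ ≥ μ / 2 * ‖x - y‖ ^ 2)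
    (x y : EuclideanSpace ℝ (Fin d)) :
    f y - f x - ⟪f' x, y - x⟫ ≥ ‖f' y - f' x‖ ^ 2 / (2 * L) := by
  have hL : 0 < L := lt_of_lt_of_le hμ hμL
  set g := f' y - f' x with hgdef
  set z := y - (1 / L) • g with hz
  have h1 : f z - f x - ⟪f' x, z - x⟫ ≥ 0 := by
    have := hsc x z
    nlinarith [sq_nonneg ‖x - z‖]
  have h2 := descent y z
  have hzy : z - y = -((1 / L) • g) := by rw [hz]; abel
  have hzx : z - x = (z - y) + (y - x) := by abel
  have e1 : ⟪f' x, z - x⟫ = ⟪f' x, z - y⟫ + ⟪f' x, y - x⟫ := by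
    rw [hzx, inner_add_right]
  have e2 : ⟪f' y, z - y⟫ = -(1/L) * ⟪f' y, g⟫ := by
    rw [hzy, inner_neg_right, real_inner_smul_right]; ring
  have e3 : ⟪f' x, z - y⟫ = -(1/L) * ⟪f' x, g⟫ := by
    rw [hzy, inner_neg_right, real_inner_smul_right]; ring
  have e4 : ‖z - y‖ ^ 2 = (1/L)^2 * ‖g‖ ^ 2 := by
    rw [hzy, norm_neg, norm_smul, Real.norm_eq_abs, mul_pow, sq_abs]
  have e5 : ⟪f' y, g⟫ - ⟪f' x, g⟫ = ‖g‖ ^ 2 := by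
    rw [← inner_sub_left, ← hgdef, real_inner_self_eq_norm_sq]
  have key : f x + ⟪f' x, z - x⟫ ≤ f y + ⟪f' y, z - y⟫ + L / 2 * ‖z - y‖ ^ 2 := by
    linarith
  rw [e1, e2, e3, e4] at key
  have h6 : f y - f x - ⟪f' x, y - x⟫ ≥ (1/L) * (⟪f' y, g⟫ - ⟪f' x, g⟫) - L/2 * ((1/L)^2 * ‖g‖^2) := by
    linarith
  rw [e5] at h6
  have heq : (1/L) * ‖g‖^2 - L/2 * ((1/L)^2 * ‖g‖^2) = ‖g‖^2 / (2*L) := by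
    field_simp; ring
  linarith

/-- Cross-term bound for the Bregman divergence of the Lyapunov function
`E(x,y) = D_f(x,x*) + (μ/2)‖y − x*‖²`, whose Bregman divergence satisfies
`D_E(z_k, z_{k+1}) = D_f(x_k, x_{k+1}) + (μ/2)‖y_k − y_{k+1}‖²`. -/
theorem aorhb_cross_term_bregman_bound {d : ℕ}
    (f : EuclideanSpace ℝ (Fin d) → ℝ) (f' : EuclideanSpace ℝ (Fin d) → EuclideanSpace ℝ (Fin d))
    (μ L : ℝ) (hμ : 0 < μ) (hμL : μ ≤ L)
    (hf : ∀ x, HasGradientAt f (f' x) x)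
    (hsc : ∀ x y, f y - f x - ⟪f' x, y - x⟫ ≥ μ / 2 * ‖x - y‖ ^ 2)
    (hsmooth : ∀ x y, ‖f' x - f' y‖ ≤ L * ‖x - y‖)
    (ρ : ℝ) (hρ : ρ = μ / L)
    (xk yk xk1 yk1 : EuclideanSpace ℝ (Fin d)) (α : ℝ) (hα : 0 < α)
    (Df DE : ℝ)
    (hDf : Df = f xk - f xk1 - ⟪f' xk1, xk - xk1⟫)
    (hDE : DE = Df + μ / 2 * ‖yk - yk1‖ ^ 2) :
    |α * ⟪yk1 - yk, f' xk1 - f' xk⟫| ≤ α / Real.sqrt ρ * (Df + μ / 2 * ‖yk - yk1‖ ^ 2) ∧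
    (∀ s : ℝ, s = 1 ∨ s = -1 →
      (1 - α / Real.sqrt ρ) * DE ≤ DE + s * (α * ⟪yk1 - yk, f' xk1 - f' xk⟫) ∧
      DE + s * (α * ⟪yk1 - yk, f' xk1 - f' xk⟫) ≤ (1 + α / Real.sqrt ρ) * DE) := by
  have hL : 0 < L := lt_of_lt_of_le hμ hμL
  have hρpos : 0 < ρ := by rw [hρ]; positivity
  set q := Real.sqrt ρ with hq
  have hqpos : 0 < q := Real.sqrt_pos.2 hρpos
  have hq2 : q ^ 2 = μ / L := by rw [hq, Real.sq_sqrt hρpos.le, hρ]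
  have hq2' : L * q ^ 2 = μ := by rw [hq2]; field_simp
  -- descent lemma and cocoercivity
  have descent := aorhb_descent_lemma f f' L hf hsmooth
  have hcoco := aorhb_coco f f' μ L hμ hμL descent hsc xk1 xk
  have hDfge : Df ≥ ‖f' xk1 - f' xk‖ ^ 2 / (2 * L) := by
    rw [hDf]
    rwa [norm_sub_rev (f' xk)] at hcoco
  set G := ‖f' xk1 - f' xk‖ with hG
  set a := ‖yk - yk1‖ with ha
  have hGnn : 0 ≤ G := norm_nonneg _
  have hann : 0 ≤ a := norm_nonneg _
  -- key: q * (G * a) ≤ Df + μ/2 * a ^ 2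
  have hG2 : G ^ 2 ≤ 2 * L * Df := by
    rw [ge_iff_le, div_le_iff₀ (by positivity : (0:ℝ) < 2 * L)] at hDfge
    linarith
  have e : L ^ 2 * q ^ 2 * a ^ 2 = L * (μ * a ^ 2) := by
    calc L ^ 2 * q ^ 2 * a ^ 2 = (L * q ^ 2) * (L * a ^ 2) := by ring
      _ = μ * (L * a ^ 2) := by rw [hq2']
      _ = L * (μ * a ^ 2) := by ring
  have h2L : 2 * L * (q * (G * a)) ≤ 2 * L * (Df + μ / 2 * a ^ 2) := by
    nlinarith [sq_nonneg (G - L * q * a), e, hG2]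
  have key : q * (G * a) ≤ Df + μ / 2 * a ^ 2 :=
    (mul_le_mul_iff_right₀ (by positivity : (0:ℝ) < 2 * L)).mp h2L
  -- cross term bound
  have hinner : |⟪yk1 - yk, f' xk1 - f' xk⟫| ≤ G * a := by
    have := abs_real_inner_le_norm (yk1 - yk) (f' xk1 - f' xk)
    rw [norm_sub_rev yk1 yk] at this
    calc |⟪yk1 - yk, f' xk1 - f' xk⟫| ≤ ‖yk - yk1‖ * ‖f' xk1 - f' xk‖ := this
      _ = G * a := by rw [← hG, ← ha]; ring
  have main : |α * ⟪yk1 - yk, f' xk1 - f' xk⟫| ≤ α / q * (Df + μ / 2 * a ^ 2) := by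
    rw [abs_mul, abs_of_pos hα]
    have h1 : G * a ≤ (Df + μ / 2 * a ^ 2) / q := by
      rw [le_div_iff₀ hqpos]; linarith [key]
    calc α * |⟪yk1 - yk, f' xk1 - f' xk⟫| ≤ α * (G * a) := by
          exact mul_le_mul_of_nonneg_left hinner hα.le
      _ ≤ α * ((Df + μ / 2 * a ^ 2) / q) := mul_le_mul_of_nonneg_left h1 hα.le
      _ = α / q * (Df + μ / 2 * a ^ 2) := by ring
  refine ⟨main, ?_⟩
  intro s hs
  have hbound : |α * ⟪yk1 - yk, f' xk1 - f' xk⟫| ≤ α / q * DE := by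
    rw [hDE]; exact main
  obtain ⟨hlo, hhi⟩ := abs_le.mp hbound
  rcases hs with rfl | rfl
  · constructor <;> · rw [one_mul]; linarith
  · constructor <;> · rw [neg_one_mul]; linarith
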